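/- For n ≥ 1, the permutahedron Π_n, defined as the convex hull of all points (σ(1),...,σ(n)) for σ in the symmetric group S_n, equals the set of points (x_1,...,x_n) in R^n such that x_1+...+x_n = n(n+1)/2 and for every nonempty proper subset S ⊆ [n], the sum of x_i over i ∈ S is at least binom(|S|+1, 2). -/

import Mathlib

open Finset

-- triangular number cast
lemma tri_cast (k : ℕ) : ((k+1).choose 2 : ℝ) = k*(k+1)/2 := by
  have h : (k+1).choose 2 * 2 = k * (k+1) := by
    rw [Nat.choose_two_right]
    rw [Nat.succ_sub_one, Nat.mul_comm (k+1) k]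
    rw [Nat.div_mul_cancel (Nat.even_mul_succ_self k).two_dvd]
  have := congrArg (fun t : ℕ => (t : ℝ)) h
  push_cast at this
  linarith

-- distinct naturals sum lower bound
lemma sum_distinct_nat (T : Finset ℕ) : ∑ i ∈ Finset.range T.card, i ≤ ∑ i ∈ T, i := by
  induction T using Finset.strongInduction with
  | _ T ih =>
    rcases T.eq_empty_or_nonempty with rfl | hT
    · simp
    · have hm := T.max'_mem hT
      have hcard : T ⊆ Finset.range (T.max' hT + 1) := by
        intro a ha; simp [Nat.lt_succ_iff]; exact T.le_max' a ha
      have hcle : T.card ≤ T.max' hT + 1 := by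
        simpa using Finset.card_le_card hcard
      have herase : (T.erase (T.max' hT)).card = T.card - 1 := Finset.card_erase_of_mem hm
      have h1 : ∑ i ∈ Finset.range (T.card - 1), i ≤ ∑ i ∈ T.erase (T.max' hT), i := by
        rw [← herase]; exact ih _ (Finset.erase_ssubset hm)
      have h2 : ∑ i ∈ T, i = T.max' hT + ∑ i ∈ T.erase (T.max' hT), i :=
        (Finset.add_sum_erase _ _ hm).symm
      have hc1 : 1 ≤ T.card := Finset.card_pos.2 hT
      have h3 : Finset.range T.card = insert (T.card - 1) (Finset.range (T.card - 1)) := by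
        rw [Finset.range_add_one.symm.trans]; congr 1; omega
      rw [h3, Finset.sum_insert (by simp)]
      have : T.card - 1 ≤ T.max' hT := by omega
      omega



-- vertex subset sum bound
lemma vertex_subset_sum {n : ℕ} (e : Equiv.Perm (Fin n)) (S : Finset (Fin n)) :
    ((S.card : ℝ) * (S.card + 1)) / 2 ≤ ∑ i ∈ S, ((e i : ℝ) + 1) := by
  classical
  set T : Finset ℕ := S.image (fun i => (e i : ℕ)) with hT
  have hinj : Function.Injective (fun i : Fin n => (e i : ℕ)) := by
    intro a b hab
    exact e.injective (Fin.val_injective hab)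
  have hcard : T.card = S.card := Finset.card_image_of_injective _ hinj
  have hsum : ∑ i ∈ T, i = ∑ i ∈ S, (e i : ℕ) := by
    rw [hT, Finset.sum_image (fun a _ b _ h => hinj h)]
  have h1 : ∑ i ∈ Finset.range S.card, i ≤ ∑ i ∈ S, (e i : ℕ) := by
    rw [← hsum, ← hcard]; exact sum_distinct_nat T
  have h2 : (∑ i ∈ Finset.range S.card, i) * 2 = S.card * (S.card - 1) :=
    Finset.sum_range_id_mul_two _
  have h3 : ((∑ i ∈ S, (e i : ℕ) : ℕ) : ℝ) ≥ (S.card : ℝ) * (S.card - 1) / 2 := by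
    have hc := (Nat.cast_le (α := ℝ)).2 h1
    have h2' := congrArg (fun t : ℕ => (t : ℝ)) h2
    rcases Nat.eq_zero_or_pos S.card with h | h
    · simp [h] at *; positivity
    · push_cast [Nat.cast_sub (by omega : 1 ≤ S.card)] at h2' hc ⊢
      linarith
  have h4 : ∑ i ∈ S, ((e i : ℝ) + 1) = ((∑ i ∈ S, (e i : ℕ) : ℕ) : ℝ) + S.card := by
    push_cast; rw [Finset.sum_add_distrib]; simp
  rw [h4]; linarith


theorem key : ∀ (m : ℕ) (ι : Type) [Fintype ι] [DecidableEq ι],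
    Fintype.card ι = m → ∀ (c : ℝ) (x : ι → ℝ),
    (∑ i, x i) = m * c + m*(m+1)/2 →
    (∀ S : Finset ι, S ≠ Finset.univ →
      (S.card : ℝ) * c + S.card*(S.card+1)/2 ≤ ∑ i ∈ S, x i) →
    x ∈ convexHull ℝ {p : ι → ℝ | ∃ e : ι ≃ Fin m, p = fun i => c + (e i : ℝ) + 1} := by
  intro m
  induction m using Nat.strong_induction_on with
  | _ m IH =>
  intro ι _ _ hcard c x hsum hineq
  -- the case where some nonempty proper subset is tight
  have tight_case : ∀ y : ι → ℝ,
      (∑ i, y i) = m * c + m*(m+1)/2 →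
      (∀ S : Finset ι, S ≠ Finset.univ →
        (S.card : ℝ) * c + S.card*(S.card+1)/2 ≤ ∑ i ∈ S, y i) →
      ∀ S₀ : Finset ι, S₀.Nonempty → S₀ ≠ Finset.univ →
        (∑ i ∈ S₀, y i) = (S₀.card : ℝ) * c + S₀.card*(S₀.card+1)/2 →
      y ∈ convexHull ℝ {p : ι → ℝ | ∃ e : ι ≃ Fin m, p = fun i => c + (e i : ℝ) + 1} := by
    intro y hysum hyineq S₀ hS₀ne hS₀univ htight
    set k := S₀.card with hk
    have hk1 : 1 ≤ k := Finset.card_pos.2 hS₀ne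
    have hkm : k < m := by
      have h := Finset.card_lt_card (Finset.ssubset_univ_iff.2 hS₀univ)
      rwa [Finset.card_univ, hcard] at h
    have hmk : ((m - k : ℕ) : ℝ) = (m : ℝ) - (k : ℝ) := by
      push_cast [Nat.cast_sub hkm.le]; ring
    set x₁ : ↥S₀ → ℝ := fun i => y i.val with hx₁
    set x₂ : ↥(S₀ᶜ) → ℝ := fun i => y i.val with hx₂
    have hcard₁ : Fintype.card ↥S₀ = k := Fintype.card_coe S₀
    have hcard₂ : Fintype.card ↥(S₀ᶜ) = m - k := by
      rw [Fintype.card_coe, Finset.card_compl, hcard]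
    -- membership of the first part
    have h₁ : x₁ ∈ convexHull ℝ
        {p : ↥S₀ → ℝ | ∃ e : ↥S₀ ≃ Fin k, p = fun i => c + (e i : ℝ) + 1} := by
      apply IH k hkm ↥S₀ hcard₁ c x₁
      · rw [hx₁]
        rw [Finset.sum_coe_sort S₀ y]
        exact htight
      · intro U hU
        set U' : Finset ι := U.image Subtype.val with hU'
        have hUc : U'.card = U.card :=
          Finset.card_image_of_injective _ Subtype.val_injective
        have hUs : ∑ i ∈ U', y i = ∑ i ∈ U, x₁ i := by
          rw [hU', Finset.sum_image (fun a _ b _ h => Subtype.val_injective h)]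
        have hUsub : U' ⊆ S₀ := by
          intro a ha
          rw [hU'] at ha
          obtain ⟨b, _, rfl⟩ := Finset.mem_image.1 ha
          exact b.2
        have hU'univ : U' ≠ Finset.univ := by
          intro h
          exact hS₀univ (Finset.eq_univ_iff_forall.2 fun a =>
            hUsub (h ▸ Finset.mem_univ a))
        have := hyineq U' hU'univ
        rw [hUc, hUs] at this
        exact this
    -- membership of the second part
    have h₂ : x₂ ∈ convexHull ℝ
        {p : ↥(S₀ᶜ) → ℝ | ∃ e : ↥(S₀ᶜ) ≃ Fin (m - k),
          p = fun i => (c + k) + (e i : ℝ) + 1} := by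
      apply IH (m - k) (by omega) ↥(S₀ᶜ) hcard₂ (c + k) x₂
      · rw [hx₂, Finset.sum_coe_sort S₀ᶜ y, hmk]
        have hA := Finset.sum_compl_add_sum S₀ y
        rw [htight] at hA
        linear_combination hA + hysum
      · intro U hU
        set U' : Finset ι := U.image Subtype.val with hU'
        have hUc : U'.card = U.card :=
          Finset.card_image_of_injective _ Subtype.val_injective
        have hUs : ∑ i ∈ U', y i = ∑ i ∈ U, x₂ i := by
          rw [hU', Finset.sum_image (fun a _ b _ h => Subtype.val_injective h)]
        have hUsub : U' ⊆ S₀ᶜ := by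
          intro a ha
          obtain ⟨b, _, rfl⟩ := Finset.mem_image.1 ha
          exact b.2
        have hdisj : Disjoint S₀ U' := by
          rw [Finset.disjoint_left]
          intro a haS haU
          exact (Finset.mem_compl.1 (hUsub haU)) haS
        obtain ⟨b, hb⟩ : ∃ b : ↥(S₀ᶜ), b ∉ U := by
          by_contra h
          push_neg at h
          exact hU (Finset.eq_univ_iff_forall.2 h)
        have hVuniv : S₀ ∪ U' ≠ Finset.univ := by
          intro h
          have hbmem : (b : ι) ∈ S₀ ∪ U' := h ▸ Finset.mem_univ _
          rcases Finset.mem_union.1 hbmem with h' | h'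
          · exact (Finset.mem_compl.1 b.2) h'
          · obtain ⟨b', hb', hbeq⟩ := Finset.mem_image.1 h'
            cases Subtype.val_injective hbeq
            exact hb hb'
        have hVcard : (S₀ ∪ U').card = k + U.card := by
          rw [Finset.card_union_of_disjoint hdisj, hUc]
        have hVineq := hyineq (S₀ ∪ U') hVuniv
        rw [hVcard, Finset.sum_union hdisj, hUs] at hVineq
        rw [htight] at hVineq
        push_cast at hVineq ⊢
        nlinarith [hVineq]
    -- glue the two parts
    set L : ((↥S₀ → ℝ) × (↥(S₀ᶜ) → ℝ)) →ₗ[ℝ] (ι → ℝ) :=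
      { toFun := fun pq i =>
          if h : i ∈ S₀ then pq.1 ⟨i, h⟩ else pq.2 ⟨i, Finset.mem_compl.2 h⟩
        map_add' := by
          intro a b; funext i; by_cases h : i ∈ S₀ <;> simp [h]
        map_smul' := by
          intro r a; funext i; by_cases h : i ∈ S₀ <;> simp [h] } with hL
    have hLy : L (x₁, x₂) = y := by
      funext i
      rw [hL]
      by_cases h : i ∈ S₀ <;> simp [h, hx₁, hx₂]
    have hmem := mk_mem_convexHull_prod h₁ h₂
    have himg : y ∈ L '' (convexHull ℝ
        ({p : ↥S₀ → ℝ | ∃ e : ↥S₀ ≃ Fin k, p = fun i => c + (e i : ℝ) + 1} ×ˢ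
         {p : ↥(S₀ᶜ) → ℝ | ∃ e : ↥(S₀ᶜ) ≃ Fin (m - k),
            p = fun i => (c + k) + (e i : ℝ) + 1})) := ⟨_, hmem, hLy⟩
    rw [L.image_convexHull] at himg
    refine convexHull_mono ?_ himg
    rintro _ ⟨⟨p, q⟩, ⟨⟨e1, rfl⟩, ⟨e2, rfl⟩⟩, rfl⟩
    have hkmk : k + (m - k) = m := by omega
    set e2' : {a : ι // ¬ a ∈ S₀} ≃ Fin (m - k) :=
      (Equiv.subtypeEquivRight (fun a => (Finset.mem_compl (s := S₀)).symm)).trans e2 with he2'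
    refine ⟨((Equiv.sumCompl (fun i => i ∈ S₀)).symm.trans
      ((e1.sumCongr e2').trans (finSumFinEquiv.trans (finCongr hkmk)))), ?_⟩
    funext i
    rw [hL]
    by_cases h : i ∈ S₀
    · simp only [LinearMap.coe_mk, AddHom.coe_mk, dif_pos h, Equiv.trans_apply,
        Equiv.sumCompl_symm_apply_of_pos h, Equiv.sumCongr_apply, Sum.map_inl,
        finSumFinEquiv_apply_left, finCongr_apply, Fin.coe_cast, Fin.coe_castAdd]
    · simp only [LinearMap.coe_mk, AddHom.coe_mk, dif_neg h, Equiv.trans_apply,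
        Equiv.sumCompl_symm_apply_of_neg h, Equiv.sumCongr_apply, Sum.map_inr,
        finSumFinEquiv_apply_right, finCongr_apply, Fin.coe_cast, Fin.coe_natAdd,
        he2', Equiv.subtypeEquivRight_apply]
      push_cast
      ring
  by_cases hex : ∃ S₀ : Finset ι, S₀.Nonempty ∧ S₀ ≠ Finset.univ ∧
      (∑ i ∈ S₀, x i) = (S₀.card : ℝ) * c + S₀.card*(S₀.card+1)/2
  · obtain ⟨S₀, h1, h2, h3⟩ := hex
    exact tight_case x hsum hineq S₀ h1 h2 h3
  · push_neg at hex
    rcases lt_or_ge m 2 with hm | hm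
    · interval_cases m
      · -- m = 0
        have hempty : IsEmpty ι := Fintype.card_eq_zero_iff.1 hcard
        apply subset_convexHull
        exact ⟨Fintype.equivFinOfCardEq hcard, funext fun i => isEmptyElim i⟩
      · -- m = 1
        obtain ⟨i₀, hi₀⟩ := Fintype.card_eq_one_iff.1 hcard
        have huniv : (Finset.univ : Finset ι) = {i₀} := by
          ext a; simp [hi₀ a]
        rw [huniv, Finset.sum_singleton] at hsum
        apply subset_convexHull
        refine ⟨Fintype.equivFinOfCardEq hcard, funext fun i => ?_⟩
        rw [hi₀ i]
        have : ((Fintype.equivFinOfCardEq hcard i₀ : Fin 1) : ℕ) = 0 := by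
          simp [Fin.val_eq_zero]
        rw [this]
        push_cast at hsum ⊢
        linarith
    · -- m ≥ 2
      have move : ∀ i j : ι, i ≠ j →
          ∃ t : ℝ, 0 < t ∧
            (fun l => x l + (if l = i then t else 0) - (if l = j then t else 0)) ∈
              convexHull ℝ {p : ι → ℝ | ∃ e : ι ≃ Fin m, p = fun i => c + (e i : ℝ) + 1} := by
        intro i j hij
        set g : Finset ι → ℝ :=
          fun S => ∑ l ∈ S, x l - ((S.card : ℝ) * c + S.card*(S.card+1)/2) with hg
        set F : Finset (Finset ι) := Finset.univ.filter (fun S => j ∈ S ∧ i ∉ S) with hF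
        have hFj : ({j} : Finset ι) ∈ F := by
          simp [hF, Finset.mem_singleton, hij]
        have hFne : F.Nonempty := ⟨{j}, hFj⟩
        set t := F.inf' hFne g with htdef
        have hgpos : ∀ S ∈ F, 0 < g S := by
          intro S hS
          rw [hF, Finset.mem_filter] at hS
          obtain ⟨-, hjS, hiS⟩ := hS
          have hSuniv : S ≠ Finset.univ := fun h => hiS (h ▸ Finset.mem_univ i)
          have h1 := hineq S hSuniv
          have h2 := hex S ⟨j, hjS⟩ hSuniv
          rw [hg]
          rcases lt_or_eq_of_le h1 with h | h
          · linarith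
          · exact absurd h.symm h2
        have ht : 0 < t := by
          rw [htdef]
          exact (Finset.lt_inf'_iff hFne).2 hgpos
        obtain ⟨S₁, hS₁F, hS₁⟩ := Finset.exists_mem_eq_inf' hFne g
        rw [hF, Finset.mem_filter] at hS₁F
        obtain ⟨-, hjS₁, hiS₁⟩ := hS₁F
        set y := fun l => x l + (if l = i then t else 0) - (if l = j then t else 0) with hy
        have hTsum : ∀ T : Finset ι, ∑ l ∈ T, y l =
            ∑ l ∈ T, x l + (if i ∈ T then t else 0) - (if j ∈ T then t else 0) := by
          intro T
          rw [hy]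
          simp only [Finset.sum_sub_distrib, Finset.sum_add_distrib]
          rw [Finset.sum_ite_eq' T i (fun _ => t), Finset.sum_ite_eq' T j (fun _ => t)]
        refine ⟨t, ht, tight_case y ?_ ?_ S₁ ⟨j, hjS₁⟩ (fun h => hiS₁ (h ▸ Finset.mem_univ i)) ?_⟩
        · rw [hTsum Finset.univ]
          simp only [Finset.mem_univ, if_pos]
          rw [hsum]; ring
        · intro S hS
          rw [hTsum S]
          have base := hineq S hS
          by_cases hjS : j ∈ S <;> by_cases hiS : i ∈ S <;> simp only [hjS, hiS, if_pos, if_neg,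
            if_true, if_false]
          · linarith
          · -- j ∈ S, i ∉ S : S ∈ F
            have hSF : S ∈ F := by
              rw [hF, Finset.mem_filter]
              exact ⟨Finset.mem_univ _, hjS, hiS⟩
            have := Finset.inf'_le g hSF
            rw [← htdef] at this
            rw [hg] at this
            simp only at this
            linarith
          · linarith
          · linarith
        · rw [hTsum S₁]
          simp only [hjS₁, hiS₁, if_pos, if_neg, if_true, if_false]
          rw [hg] at hS₁
          simp only at hS₁
          rw [← htdef] at hS₁
          linarith [hS₁]
      obtain ⟨i, j, hij⟩ := Fintype.exists_pair_of_one_lt_card (by omega : 1 < Fintype.card ι)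
      obtain ⟨t, ht, hymem⟩ := move i j hij
      obtain ⟨s, hs, hzmem⟩ := move j i hij.symm
      have ha : (0:ℝ) ≤ s / (t + s) := by positivity
      have hb : (0:ℝ) ≤ t / (t + s) := by positivity
      have hab : s / (t + s) + t / (t + s) = 1 := by
        field_simp
        ring
      have hcomb := (convex_convexHull ℝ
        {p : ι → ℝ | ∃ e : ι ≃ Fin m, p = fun i => c + (e i : ℝ) + 1}) hymem hzmem ha hb hab
      have hxeq : x = (s / (t + s)) • (fun l => x l + (if l = i then t else 0) - (if l = j then t else 0))
          + (t / (t + s)) • (fun l => x l + (if l = j then s else 0) - (if l = i then s else 0)) := by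
        funext l
        simp only [Pi.add_apply, Pi.smul_apply, smul_eq_mul]
        by_cases hli : l = i <;> by_cases hlj : l = j
        · exact absurd (hli ▸ hlj ▸ rfl) hij
        · rw [if_pos hli, if_neg hlj, if_pos hli, if_neg hlj]
          field_simp
          ring
        · rw [if_neg hli, if_pos hlj, if_neg hli, if_pos hlj]
          field_simp
          ring
        · rw [if_neg hli, if_neg hlj, if_neg hli, if_neg hlj]
          field_simp
          ring
      rw [hxeq]
      exact hcomb

lemma fin_sum_succ (n : ℕ) : ∑ j : Fin n, ((j : ℝ) + 1) = (n * (n + 1) : ℝ) / 2 := by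
  induction n with
  | zero => simp
  | succ n ih =>
    rw [Fin.sum_univ_castSucc]
    simp only [Fin.coe_castSucc, Fin.val_last]
    rw [ih]
    push_cast
    ring

theorem permutahedron_H_description (n : ℕ) (hn : 1 ≤ n) :
    convexHull ℝ {p : Fin n → ℝ | ∃ σ : Equiv.Perm (Fin n), p = fun i => (σ i : ℝ) + 1} =
      {x : Fin n → ℝ |
        (∑ i, x i) = (n * (n + 1) : ℝ) / 2 ∧
        ∀ S : Finset (Fin n), S.Nonempty → S ≠ Finset.univ →
          ((S.card + 1).choose 2 : ℝ) ≤ ∑ i ∈ S, x i} := by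
  apply Set.Subset.antisymm
  · -- easy direction
    apply convexHull_min
    · rintro p ⟨σ, rfl⟩
      constructor
      · rw [Equiv.sum_comp σ (fun j : Fin n => (j : ℝ) + 1)]
        exact fin_sum_succ n
      · intro S _ _
        rw [tri_cast]
        have := vertex_subset_sum σ S
        linarith
    · -- convexity of the constraint set
      intro u hu v hv a b ha hb hab
      constructor
      · simp only [Pi.add_apply, Pi.smul_apply, smul_eq_mul]
        rw [Finset.sum_add_distrib, ← Finset.mul_sum, ← Finset.mul_sum, hu.1, hv.1]
        rw [← add_mul, hab, one_mul]
      · intro S hS hSu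
        simp only [Pi.add_apply, Pi.smul_apply, smul_eq_mul]
        rw [Finset.sum_add_distrib, ← Finset.mul_sum, ← Finset.mul_sum]
        have h1 := hu.2 S hS hSu
        have h2 := hv.2 S hS hSu
        nlinarith
  · -- hard direction
    intro x hx
    have hkey := key n (Fin n) (Fintype.card_fin n) 0 x ?_ ?_
    · refine convexHull_mono ?_ hkey
      rintro p ⟨e, rfl⟩
      exact ⟨e, by funext i; ring⟩
    · rw [hx.1]; ring
    · intro S hSu
      rcases S.eq_empty_or_nonempty with rfl | hSne
      · simp
      · have := hx.2 S hSne hSu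
        rw [tri_cast] at this
        linarith
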